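/- Let X be a metric space, A, B ⊆ X closed subsets, S ⊆ A ∪ B a compact connected set meeting both A and B, and S_A a connected component of S ∩ A. Then S_A ∩ B ≠ ∅. -/

import Mathlib

open Set

/-- In a compact Hausdorff space, if the connected component of `y` is contained in an open
set `U`, there is a clopen set containing `y` inside `U`. -/
lemma exists_isClopen_of_connectedComponent_subset {Y : Type*} [TopologicalSpace Y] [T2Space Y]
    [CompactSpace Y] {y : Y} {U : Set Y} (hU : IsOpen U) (h : connectedComponent y ⊆ U) :
    ∃ K : Set Y, IsClopen K ∧ y ∈ K ∧ K ⊆ U := by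
  let N := { s : Set Y // IsClopen s ∧ y ∈ s }
  haveI : Nonempty N := ⟨⟨univ, isClopen_univ, mem_univ y⟩⟩
  have hNcl : ∀ s : N, IsClosed s.val := fun s => s.property.1.1
  have hdir : Directed (· ⊇ ·) fun s : N => s.val := by
    rintro ⟨s, hs, hys⟩ ⟨t, ht, hyt⟩
    exact ⟨⟨s ∩ t, hs.inter ht, ⟨hys, hyt⟩⟩, inter_subset_left, inter_subset_right⟩
  have h_nhd : ∀ z ∈ ⋂ s : N, s.val, U ∈ nhds z := by
    intro z hz
    have : z ∈ connectedComponent y := by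
      rw [connectedComponent_eq_iInter_isClopen]
      exact mem_iInter.mpr fun s => mem_iInter.mp hz s
    exact hU.mem_nhds (h this)
  obtain ⟨⟨s, hs, hys⟩, hsU⟩ := exists_subset_nhds_of_compactSpace hdir hNcl h_nhd
  exact ⟨s, hs, hys, hsU⟩

theorem stmt5 {X : Type*} [MetricSpace X] (A B S SA : Set X)
    (hA : IsClosed A) (hB : IsClosed B) (hS : S ⊆ A ∪ B)
    (hSc : IsCompact S) (hSconn : IsConnected S)
    (hSA : (S ∩ A).Nonempty) (hSB : (S ∩ B).Nonempty)
    (x : X) (hx : x ∈ S ∩ A) (hcomp : SA = connectedComponentIn (S ∩ A) x) :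
    (SA ∩ B).Nonempty := by
  by_contra hne
  rw [not_nonempty_iff_eq_empty] at hne
  -- the subtype S ∩ A is a compact Hausdorff space
  have hSAc : IsCompact (S ∩ A) := hSc.inter_right hA
  haveI : CompactSpace ↥(S ∩ A) := isCompact_iff_compactSpace.mp hSAc
  set y : ↥(S ∩ A) := ⟨x, hx⟩ with hy
  have himg : SA = (↑) '' connectedComponent y := by
    rw [hcomp, connectedComponentIn_eq_image hx]
  -- the open set avoiding B
  have hU : IsOpen ((↑) ⁻¹' Bᶜ : Set ↥(S ∩ A)) :=
    hB.isOpen_compl.preimage continuous_subtype_val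
  have hsub : connectedComponent y ⊆ (↑) ⁻¹' Bᶜ := by
    intro z hz
    have hzSA : (z : X) ∈ SA := himg ▸ mem_image_of_mem _ hz
    intro hzB
    exact absurd (mem_inter hzSA hzB) (by rw [hne]; exact notMem_empty _)
  obtain ⟨K, hK, hyK, hKU⟩ := exists_isClopen_of_connectedComponent_subset hU hsub
  -- K' is a clopen piece of S containing x and avoiding B
  set K' : Set X := (↑) '' K with hK'
  have hK'S : K' ⊆ S := by rintro _ ⟨z, _, rfl⟩; exact z.2.1
  have hK'B : ∀ w ∈ K', w ∉ B := by rintro _ ⟨z, hzK, rfl⟩; exact hKU hzK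
  have hK'cl : IsClosed K' :=
    ((hK.1.isCompact).image continuous_subtype_val).isClosed
  -- the complementary closed set
  set T : Set X := (S ∩ B) ∪ ((S ∩ A) \ K') with hT
  have hTcl : IsClosed T := by
    apply IsClosed.union (hSc.inter_right hB).isClosed
    -- (S ∩ A) \ K' is closed: K is open in the subtype
    obtain ⟨V, hV, hKV⟩ := isOpen_induced_iff.mp hK.2
    have : (S ∩ A) \ K' = (S ∩ A) ∩ Vᶜ := by
      ext w
      simp only [mem_diff, mem_inter_iff, mem_compl_iff, and_congr_right_iff]
      intro hw
      constructor
      · intro hwK hwV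
        exact hwK ⟨⟨w, hw⟩, by rw [← hKV]; exact hwV, rfl⟩
      · rintro hwV ⟨z, hzK, hzw⟩
        apply hwV
        have : z ∈ ((↑) ⁻¹' V : Set ↥(S ∩ A)) := by rw [hKV]; exact hzK
        simpa [hzw] using this
    rw [this]
    exact hSAc.isClosed.inter hV.isClosed_compl
  -- apply connectedness of S with the two closed sets K' and T
  have hcover : S ⊆ K' ∪ T := by
    intro w hw
    by_cases hwK : w ∈ K'
    · exact Or.inl hwK
    · rcases hS hw with hwA | hwB
      · exact Or.inr (Or.inr ⟨⟨hw, hwA⟩, hwK⟩)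
      · exact Or.inr (Or.inl ⟨hw, hwB⟩)
  have h1 : (S ∩ K').Nonempty := ⟨x, hx.1, ⟨y, hyK, rfl⟩⟩
  have h2 : (S ∩ T).Nonempty := hSB.imp fun w hw => ⟨hw.1, Or.inl hw⟩
  obtain ⟨w, hwS, hwK', hwT⟩ :=
    (isPreconnected_closed_iff.mp hSconn.isPreconnected) K' T hK'cl hTcl hcover h1 h2
  rcases hwT with hwB | hwA
  · exact hK'B w hwK' hwB.2
  · exact hwA.2 hwK'
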